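/- Let G be a group such that Hom(G, ℤ/2) has exactly 16 elements (i.e., is a 4-dimensional vector space over the field with two elements), and let ρ: G → Sp(1) be a projective representation whose image is exactly Q8 = {±1, ±i, ±j, ±k}. Then the orbit of the conjugacy class of ρ under the twisting action χ·[ρ] = [ρ^χ] of Hom(G, {±1}) has exactly 4 elements. -/

import Mathlib

noncomputable section

open Quaternion

/-- A projective representation of `G` in the group `Sp(1)` of unit quaternions:
a function with values of norm one such that `ρ(gh)ρ(h)⁻¹ρ(g)⁻¹ ∈ {±1}`. -/
def IsProjRep {G : Type*} [Group G] (ρ : G → ℍ[ℝ]) : Prop :=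
  (∀ g : G, ‖ρ g‖ = 1) ∧
    ∀ g h : G, ρ (g * h) * (ρ h)⁻¹ * (ρ g)⁻¹ = 1 ∨ ρ (g * h) * (ρ h)⁻¹ * (ρ g)⁻¹ = -1

/-- A homomorphism from `G` into the subgroup `{±1}` of unit quaternions. -/
def IsSignHom {G : Type*} [Group G] (χ : G → ℍ[ℝ]) : Prop :=
  (∀ g : G, χ g = 1 ∨ χ g = -1) ∧ ∀ g h : G, χ (g * h) = χ g * χ h

/-- A projective representation `ρ` is irreducible if the centralizer of its image in `Sp(1)`
is `{±1}`. -/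
def IsIrred {G : Type*} [Group G] (ρ : G → ℍ[ℝ]) : Prop :=
  ∀ q : ℍ[ℝ], ‖q‖ = 1 → (∀ g : G, q * ρ g = ρ g * q) → q = 1 ∨ q = -1

def qi : ℍ[ℝ] := ⟨0, 1, 0, 0⟩
def qj : ℍ[ℝ] := ⟨0, 0, 1, 0⟩
def qk : ℍ[ℝ] := ⟨0, 0, 0, 1⟩

/-- The quaternion group `Q8 = {±1, ±i, ±j, ±k}` inside the unit quaternions. -/
def Q8 : Set ℍ[ℝ] := {1, -1, qi, -qi, qj, -qj, qk, -qk}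

/-- The conjugacy class of a map `ρ : G → Sp(1)`: its orbit under conjugation by
unit quaternions. -/
def conjClass {G : Type*} [Group G] (ρ : G → ℍ[ℝ]) : Set (G → ℍ[ℝ]) :=
  {σ : G → ℍ[ℝ] | ∃ u : ℍ[ℝ], ‖u‖ = 1 ∧ ∀ g : G, σ g = u * ρ g * u⁻¹}

lemma qi_re : qi.re = 0 := rfl
lemma qi_imI : qi.imI = 1 := rfl
lemma qi_imJ : qi.imJ = 0 := rfl
lemma qi_imK : qi.imK = 0 := rfl
lemma qj_re : qj.re = 0 := rfl
lemma qj_imI : qj.imI = 0 := rfl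
lemma qj_imJ : qj.imJ = 1 := rfl
lemma qj_imK : qj.imK = 0 := rfl
lemma qk_re : qk.re = 0 := rfl
lemma qk_imI : qk.imI = 0 := rfl
lemma qk_imJ : qk.imJ = 0 := rfl
lemma qk_imK : qk.imK = 1 := rfl

/-! ### Auxiliary quaternion computations -/

lemma qi_mul_qi : qi * qi = -1 := by ext <;> simp [qi_re, qi_imI, qi_imJ, qi_imK]
lemma qj_mul_qj : qj * qj = -1 := by ext <;> simp [qj_re, qj_imI, qj_imJ, qj_imK]
lemma qk_mul_qk : qk * qk = -1 := by ext <;> simp [qk_re, qk_imI, qk_imJ, qk_imK]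
lemma qi_mul_qj : qi * qj = qk := by ext <;> simp [qi_re, qi_imI, qi_imJ, qi_imK, qj_re, qj_imI, qj_imJ, qj_imK, qk_re, qk_imI, qk_imJ, qk_imK]
lemma qj_mul_qi : qj * qi = -qk := by ext <;> simp [qi_re, qi_imI, qi_imJ, qi_imK, qj_re, qj_imI, qj_imJ, qj_imK, qk_re, qk_imI, qk_imJ, qk_imK]
lemma qj_mul_qk : qj * qk = qi := by ext <;> simp [qi_re, qi_imI, qi_imJ, qi_imK, qj_re, qj_imI, qj_imJ, qj_imK, qk_re, qk_imI, qk_imJ, qk_imK]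
lemma qk_mul_qj : qk * qj = -qi := by ext <;> simp [qi_re, qi_imI, qi_imJ, qi_imK, qj_re, qj_imI, qj_imJ, qj_imK, qk_re, qk_imI, qk_imJ, qk_imK]
lemma qk_mul_qi : qk * qi = qj := by ext <;> simp [qi_re, qi_imI, qi_imJ, qi_imK, qj_re, qj_imI, qj_imJ, qj_imK, qk_re, qk_imI, qk_imJ, qk_imK]
lemma qi_mul_qk : qi * qk = -qj := by ext <;> simp [qi_re, qi_imI, qi_imJ, qi_imK, qj_re, qj_imI, qj_imJ, qj_imK, qk_re, qk_imI, qk_imJ, qk_imK]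

lemma one_ne_negone : (1 : ℍ[ℝ]) ≠ -1 := by
  intro h; have := congrArg QuaternionAlgebra.re h; norm_num at this
lemma qi_ne_neg : qi ≠ -qi := by
  intro h; have := congrArg QuaternionAlgebra.imI h; norm_num [qi_re, qi_imI, qi_imJ, qi_imK] at this
lemma qj_ne_neg : qj ≠ -qj := by
  intro h; have := congrArg QuaternionAlgebra.imJ h; norm_num [qj_re, qj_imI, qj_imJ, qj_imK] at this
lemma qk_ne_neg : qk ≠ -qk := by
  intro h; have := congrArg QuaternionAlgebra.imK h; norm_num [qk_re, qk_imI, qk_imJ, qk_imK] at this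

lemma norm_qi : ‖qi‖ = 1 := by
  have h : normSq qi = 1 := by simp [Quaternion.normSq_def', qi_re, qi_imI, qi_imJ, qi_imK]
  have h2 := Quaternion.normSq_eq_norm_mul_self qi
  nlinarith [norm_nonneg qi]
lemma norm_qj : ‖qj‖ = 1 := by
  have h : normSq qj = 1 := by simp [Quaternion.normSq_def', qj_re, qj_imI, qj_imJ, qj_imK]
  have h2 := Quaternion.normSq_eq_norm_mul_self qj
  nlinarith [norm_nonneg qj]
lemma norm_qk : ‖qk‖ = 1 := by
  have h : normSq qk = 1 := by simp [Quaternion.normSq_def', qk_re, qk_imI, qk_imJ, qk_imK]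
  have h2 := Quaternion.normSq_eq_norm_mul_self qk
  nlinarith [norm_nonneg qk]

lemma base_norm : ∀ q ∈ ({1, qi, qj, qk} : Set ℍ[ℝ]), ‖q‖ = 1 := by
  rintro q (rfl | rfl | rfl | rfl)
  · exact norm_one
  · exact norm_qi
  · exact norm_qj
  · exact norm_qk

lemma base_ne_zero : ∀ q ∈ ({1, qi, qj, qk} : Set ℍ[ℝ]), q ≠ 0 := by
  intro q hq
  rw [← norm_ne_zero_iff, base_norm q hq]; norm_num

lemma commTable : ∀ q ∈ ({1, qi, qj, qk} : Set ℍ[ℝ]), ∀ x ∈ Q8,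
    q * x = x * q ∨ q * x = -(x * q) := by
  rintro q (rfl | rfl | rfl | rfl) x (rfl | rfl | rfl | rfl | rfl | rfl | rfl | rfl) <;>
    first
      | (left; simp [qi_mul_qi, qj_mul_qj, qk_mul_qk, qi_mul_qj, qj_mul_qi, qj_mul_qk,
          qk_mul_qj, qk_mul_qi, qi_mul_qk, mul_neg, neg_mul, neg_neg]; done)
      | (right; simp [qi_mul_qi, qj_mul_qj, qk_mul_qk, qi_mul_qj, qj_mul_qi, qj_mul_qk,
          qk_mul_qj, qk_mul_qi, qi_mul_qk, mul_neg, neg_mul, neg_neg]; done)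

/-! ### Sign and projective-representation helpers -/

section Helpers
variable {G : Type*} [Group G]

lemma sgn_left {s : ℍ[ℝ]} (hs : s = 1 ∨ s = -1) (x y : ℍ[ℝ]) :
    x * (s * y) = s * (x * y) := by
  rcases hs with rfl | rfl <;> simp

lemma sgn_sq {s : ℍ[ℝ]} (hs : s = 1 ∨ s = -1) : s * s = 1 := by
  rcases hs with rfl | rfl <;> simp

lemma sgn_ne_zero {s : ℍ[ℝ]} (hs : s = 1 ∨ s = -1) : s ≠ 0 := by
  rcases hs with rfl | rfl <;> norm_num

lemma rho_ne {ρ : G → ℍ[ℝ]} (hρ : IsProjRep ρ) (g : G) : ρ g ≠ 0 := by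
  rw [← norm_ne_zero_iff, hρ.1 g]; norm_num

lemma unproj {a b c d : ℍ[ℝ]} (hb : b ≠ 0) (hc : c ≠ 0) (h : a * b⁻¹ * c⁻¹ = d) :
    a = d * c * b := by
  have h1 : a * b⁻¹ = d * c := by
    rw [← h, mul_assoc, inv_mul_cancel₀ hc, mul_one]
  rw [← h1, mul_assoc, inv_mul_cancel₀ hb, mul_one]

lemma proj_mul {ρ : G → ℍ[ℝ]} (hρ : IsProjRep ρ) (g h : G) :
    ρ (g * h) = ρ g * ρ h ∨ ρ (g * h) = -(ρ g * ρ h) := by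
  rcases hρ.2 g h with h1 | h1
  · left
    have := unproj (rho_ne hρ h) (rho_ne hρ g) h1
    simpa [mul_assoc] using this
  · right
    have := unproj (rho_ne hρ h) (rho_ne hρ g) h1
    simpa [mul_assoc] using this

open Classical in
/-- The sign character measuring whether `q` commutes or anticommutes with `ρ g`. -/
def twist (ρ : G → ℍ[ℝ]) (q : ℍ[ℝ]) : G → ℍ[ℝ] :=
  fun g => if q * ρ g = ρ g * q then 1 else -1

lemma twist_sign (ρ : G → ℍ[ℝ]) (q : ℍ[ℝ]) (g : G) :
    twist ρ q g = 1 ∨ twist ρ q g = -1 := by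
  unfold twist; split <;> simp

lemma twist_rel {ρ : G → ℍ[ℝ]} {q : ℍ[ℝ]}
    (hcomm : ∀ g, q * ρ g = ρ g * q ∨ q * ρ g = -(ρ g * q)) (g : G) :
    q * ρ g = twist ρ q g * (ρ g * q) := by
  unfold twist; split
  · rename_i h; rw [one_mul]; exact h
  · rename_i h
    rcases hcomm g with h' | h'
    · exact absurd h' h
    · rw [h', neg_one_mul]

lemma twist_conj {ρ : G → ℍ[ℝ]} {q : ℍ[ℝ]}
    (hcomm : ∀ g, q * ρ g = ρ g * q ∨ q * ρ g = -(ρ g * q)) (hq : q ≠ 0) (g : G) :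
    twist ρ q g * ρ g = q * ρ g * q⁻¹ := by
  rw [twist_rel hcomm g, mul_assoc, mul_assoc, mul_inv_cancel₀ hq, mul_one]

lemma twist_hom {ρ : G → ℍ[ℝ]} {q : ℍ[ℝ]} (hρ : IsProjRep ρ) (hq : q ≠ 0)
    (hcomm : ∀ g, q * ρ g = ρ g * q ∨ q * ρ g = -(ρ g * q)) :
    IsSignHom (twist ρ q) := by
  refine ⟨twist_sign ρ q, fun g h => ?_⟩
  have base : q * (ρ g * ρ h) = (twist ρ q g * twist ρ q h) * ((ρ g * ρ h) * q) := by
    calc q * (ρ g * ρ h) = (q * ρ g) * ρ h := (mul_assoc _ _ _).symm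
      _ = (twist ρ q g * (ρ g * q)) * ρ h := by rw [twist_rel hcomm g]
      _ = twist ρ q g * (ρ g * (q * ρ h)) := by simp only [mul_assoc]
      _ = twist ρ q g * (ρ g * (twist ρ q h * (ρ h * q))) := by rw [twist_rel hcomm h]
      _ = twist ρ q g * (twist ρ q h * (ρ g * (ρ h * q))) := by
          rw [sgn_left (twist_sign ρ q h) (ρ g)]
      _ = (twist ρ q g * twist ρ q h) * ((ρ g * ρ h) * q) := by simp only [mul_assoc]
  have key : q * ρ (g * h) = (twist ρ q g * twist ρ q h) * (ρ (g * h) * q) := by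
    rcases proj_mul hρ g h with hm | hm <;> rw [hm]
    · exact base
    · calc q * -(ρ g * ρ h) = -(q * (ρ g * ρ h)) := by rw [mul_neg]
        _ = -((twist ρ q g * twist ρ q h) * ((ρ g * ρ h) * q)) := by rw [base]
        _ = (twist ρ q g * twist ρ q h) * (-(ρ g * ρ h) * q) := by
            simp only [neg_mul, mul_neg]
  have hne : ρ (g * h) * q ≠ 0 := mul_ne_zero (rho_ne hρ _) hq
  exact mul_right_cancel₀ hne ((twist_rel hcomm (g * h)).symm.trans key)

lemma signhom_mul {χ χ' : G → ℍ[ℝ]} (h : IsSignHom χ) (h' : IsSignHom χ') :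
    IsSignHom (χ * χ') := by
  constructor
  · intro g
    rcases h.1 g with h1 | h1 <;> rcases h'.1 g with h2 | h2 <;>
      simp [Pi.mul_apply, h1, h2]
  · intro g h2
    show χ (g * h2) * χ' (g * h2) = (χ g * χ' g) * (χ h2 * χ' h2)
    rw [h.2 g h2, h'.2 g h2]
    rcases h.1 h2 with h1 | h1 <;> rcases h'.1 g with h3 | h3 <;> rw [h1, h3] <;>
      simp [mul_neg, neg_mul, mul_assoc]

lemma mem_conjClass_self (σ : G → ℍ[ℝ]) : σ ∈ conjClass σ :=
  ⟨1, by simp, fun g => by simp⟩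

lemma conjClass_eq {σ τ : G → ℍ[ℝ]} (u : ℍ[ℝ]) (hu : ‖u‖ = 1)
    (h : ∀ g, τ g = u * σ g * u⁻¹) : conjClass σ = conjClass τ := by
  have hun : u ≠ 0 := by rw [← norm_ne_zero_iff, hu]; norm_num
  have hσ : ∀ g, σ g = u⁻¹ * τ g * u := by
    intro g
    rw [h g]
    calc σ g = (u⁻¹ * u) * σ g * (u⁻¹ * u) := by rw [inv_mul_cancel₀ hun]; simp
      _ = u⁻¹ * (u * σ g * u⁻¹) * u := by simp only [mul_assoc]
  ext μ
  simp only [conjClass, Set.mem_setOf_eq]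
  constructor
  · rintro ⟨v, hv, hμ⟩
    refine ⟨v * u⁻¹, by rw [norm_mul, norm_inv, hu, hv]; norm_num, fun g => ?_⟩
    rw [hμ g, hσ g, mul_inv_rev, inv_inv]
    simp only [mul_assoc]
  · rintro ⟨v, hv, hμ⟩
    refine ⟨v * u, by rw [norm_mul, hu, hv]; norm_num, fun g => ?_⟩
    rw [hμ g, h g, mul_inv_rev]
    simp only [mul_assoc]

end Helpers

lemma comm_qi {u : ℍ[ℝ]} (h : u * qi = qi * u) : u.imJ = 0 ∧ u.imK = 0 := by
  rw [Quaternion.ext_iff] at h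
  simp [qi_re, qi_imI, qi_imJ, qi_imK] at h
  obtain ⟨h1, h2⟩ := h
  constructor <;> linarith

lemma anticomm_qi {u : ℍ[ℝ]} (h : u * qi = -(qi * u)) : u.re = 0 ∧ u.imI = 0 := by
  rw [Quaternion.ext_iff] at h
  simp [qi_re, qi_imI, qi_imJ, qi_imK] at h
  obtain ⟨h1, h2⟩ := h
  constructor <;> linarith

lemma comm_qj {u : ℍ[ℝ]} (h : u * qj = qj * u) : u.imI = 0 ∧ u.imK = 0 := by
  rw [Quaternion.ext_iff] at h
  simp [qj_re, qj_imI, qj_imJ, qj_imK] at h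
  obtain ⟨h1, h2⟩ := h
  constructor <;> linarith

lemma anticomm_qj {u : ℍ[ℝ]} (h : u * qj = -(qj * u)) : u.re = 0 ∧ u.imJ = 0 := by
  rw [Quaternion.ext_iff] at h
  simp [qj_re, qj_imI, qj_imJ, qj_imK] at h
  obtain ⟨h1, h2⟩ := h
  constructor <;> linarith

lemma coe_ne_zero' {c : ℝ} (hc : c ≠ 0) : (c : ℍ[ℝ]) ≠ 0 :=
  fun h0 => hc (by simpa using congrArg QuaternionAlgebra.re h0)

lemma conj_coe {c : ℝ} (hc : c ≠ 0) (x : ℍ[ℝ]) :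
    (c : ℍ[ℝ]) * x * (c : ℍ[ℝ])⁻¹ = x := by
  rw [Quaternion.coe_commutes, mul_assoc, mul_inv_cancel₀ (coe_ne_zero' hc), mul_one]

lemma conj_coe_mul {c : ℝ} (hc : c ≠ 0) {q : ℍ[ℝ]} (hq : q ≠ 0) (x : ℍ[ℝ]) :
    ((c : ℍ[ℝ]) * q) * x * ((c : ℍ[ℝ]) * q)⁻¹ = q * x * q⁻¹ := by
  have hcq : (c : ℍ[ℝ]) * q ≠ 0 := mul_ne_zero (coe_ne_zero' hc) hq
  rw [mul_inv_eq_iff_eq_mul₀ hcq]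
  calc (c : ℍ[ℝ]) * q * x = (c : ℍ[ℝ]) * (q * x * (q⁻¹ * q)) := by
        rw [inv_mul_cancel₀ hq, mul_one, mul_assoc]
    _ = ((c : ℍ[ℝ]) * (q * x * q⁻¹)) * q := by simp only [mul_assoc]
    _ = (q * x * q⁻¹) * ((c : ℍ[ℝ]) * q) := by
        rw [Quaternion.coe_commutes]; simp only [mul_assoc]

/-- Counting lemma: if all fibers of `f` on `H` have size `k`, then
`(f '' H).ncard * k = H.ncard`. -/
lemma ncard_image_fibers {α β : Type*} {H : Set α} (hfin : H.Finite) (f : α → β) {k : ℕ}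
    (hfib : ∀ a ∈ H, {b | b ∈ H ∧ f b = f a}.ncard = k) : (f '' H).ncard * k = H.ncard := by
  classical
  set HF := hfin.toFinset with hHF
  have hcoe : ↑HF = H := hfin.coe_toFinset
  have h2 : f '' H = ↑(HF.image f) := by rw [Finset.coe_image, hcoe]
  rw [h2, Set.ncard_coe_finset, ← hcoe, Set.ncard_coe_finset]
  have hfibF : ∀ c ∈ HF.image f, (HF.filter (fun b => f b = c)).card = k := by
    intro c hc
    obtain ⟨a, ha, rfl⟩ := Finset.mem_image.mp hc
    have hset : ↑(HF.filter (fun b => f b = f a)) = {b | b ∈ H ∧ f b = f a} := by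
      ext x
      simp [Finset.mem_filter, hfin.mem_toFinset, hHF]
    calc (HF.filter (fun b => f b = f a)).card
        = ({b | b ∈ H ∧ f b = f a} : Set α).ncard := by rw [← hset, Set.ncard_coe_finset]
      _ = k := hfib a (hfin.mem_toFinset.mp ha)
  calc (HF.image f).card * k = ∑ _c ∈ HF.image f, k := by rw [Finset.sum_const, smul_eq_mul]
    _ = ∑ c ∈ HF.image f, (HF.filter (fun b => f b = c)).card :=
        Finset.sum_congr rfl fun c hc => (hfibF c hc).symm
    _ = HF.card := (Finset.card_eq_sum_card_fiberwise fun x hx =>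
        Finset.mem_image_of_mem f hx).symm

/-- If `Hom(G, ℤ/2)` has exactly sixteen elements and `ρ` is a projective representation
with image exactly `Q8`, then the orbit of the conjugacy class `[ρ]` under the twisting
action of `Hom(G, {±1})` has exactly four elements. -/
theorem orbit_of_Q8_rep_has_four_elements {G : Type*} [Group G]
    (hhom : {χ : G → ℍ[ℝ] | IsSignHom χ}.ncard = 16)
    (ρ : G → ℍ[ℝ]) (hρ : IsProjRep ρ) (hrange : Set.range ρ = Q8) :
    {C : Set (G → ℍ[ℝ]) | ∃ χ : G → ℍ[ℝ], IsSignHom χ ∧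
      C = conjClass (fun g => χ g * ρ g)}.ncard = 4 := by
  classical
  have hmemQ8 : ∀ g : G, ρ g ∈ Q8 := fun g => hrange ▸ Set.mem_range_self g
  have hρne : ∀ g : G, ρ g ≠ 0 := rho_ne hρ
  have hcommq : ∀ q ∈ ({1, qi, qj, qk} : Set ℍ[ℝ]), ∀ g : G,
      q * ρ g = ρ g * q ∨ q * ρ g = -(ρ g * q) :=
    fun q hq g => commTable q hq (ρ g) (hmemQ8 g)
  obtain ⟨gi, hgi⟩ : ∃ g : G, ρ g = qi := by
    have : qi ∈ Set.range ρ := by rw [hrange]; simp [Q8]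
    exact this
  obtain ⟨gj, hgj⟩ : ∃ g : G, ρ g = qj := by
    have : qj ∈ Set.range ρ := by rw [hrange]; simp [Q8]
    exact this
  set S : Set (G → ℍ[ℝ]) := {twist ρ 1, twist ρ qi, twist ρ qj, twist ρ qk} with hS
  -- values of the four twists at `gi` and `gj`
  have tv1 : ∀ g : G, twist ρ 1 g = 1 := fun g => if_pos (by rw [one_mul, mul_one])
  have tvii : twist ρ qi gi = 1 := if_pos (by rw [hgi])
  have tvjj : twist ρ qj gj = 1 := if_pos (by rw [hgj])
  have tvij : twist ρ qi gj = -1 :=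
    if_neg (by rw [hgj, qi_mul_qj, qj_mul_qi]; exact fun h => qk_ne_neg h)
  have tvji : twist ρ qj gi = -1 :=
    if_neg (by rw [hgi, qj_mul_qi, qi_mul_qj]; exact fun h => qk_ne_neg h.symm)
  have tvki : twist ρ qk gi = -1 :=
    if_neg (by rw [hgi, qk_mul_qi, qi_mul_qk]; exact fun h => qj_ne_neg h)
  have tvkj : twist ρ qk gj = -1 :=
    if_neg (by rw [hgj, qk_mul_qj, qj_mul_qk]; exact fun h => qi_ne_neg h.symm)
  -- the four twists are pairwise distinct
  have d1i : twist ρ 1 ≠ twist ρ qi :=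
    fun h => one_ne_negone ((tv1 gj).symm.trans ((congrFun h gj).trans tvij))
  have d1j : twist ρ 1 ≠ twist ρ qj :=
    fun h => one_ne_negone ((tv1 gi).symm.trans ((congrFun h gi).trans tvji))
  have d1k : twist ρ 1 ≠ twist ρ qk :=
    fun h => one_ne_negone ((tv1 gi).symm.trans ((congrFun h gi).trans tvki))
  have dij : twist ρ qi ≠ twist ρ qj :=
    fun h => one_ne_negone (tvii.symm.trans ((congrFun h gi).trans tvji))
  have dik : twist ρ qi ≠ twist ρ qk :=
    fun h => one_ne_negone (tvii.symm.trans ((congrFun h gi).trans tvki))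
  have djk : twist ρ qj ≠ twist ρ qk :=
    fun h => one_ne_negone (tvjj.symm.trans ((congrFun h gj).trans tvkj))
  have hScard : S.ncard = 4 := by
    rw [hS, Set.ncard_insert_of_notMem (by simp [d1i, d1j, d1k]),
        Set.ncard_insert_of_notMem (by simp [dij, dik]),
        Set.ncard_insert_of_notMem (by simp [djk]), Set.ncard_singleton]
  have hSdecomp : ∀ s ∈ S, ∃ q ∈ ({1, qi, qj, qk} : Set ℍ[ℝ]), s = twist ρ q := by
    intro s hs
    rw [hS] at hs
    rcases hs with rfl | rfl | rfl | rfl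
    · exact ⟨1, by simp, rfl⟩
    · exact ⟨qi, by simp, rfl⟩
    · exact ⟨qj, by simp, rfl⟩
    · exact ⟨qk, by simp, rfl⟩
  -- the classification of conjugations acting on the image Q8 by signs
  have hclassify : ∀ u : ℍ[ℝ], ‖u‖ = 1 → ∀ δ : G → ℍ[ℝ], (∀ g, δ g = 1 ∨ δ g = -1) →
      (∀ g, δ g * ρ g = u * ρ g * u⁻¹) → δ ∈ S := by
    intro u hu δ hδs hrel
    have hune : u ≠ 0 := by rw [← norm_ne_zero_iff, hu]; norm_num
    have hrel' : ∀ g, u * ρ g = δ g * ρ g * u := by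
      intro g
      calc u * ρ g = u * ρ g * u⁻¹ * u := by rw [mul_assoc, inv_mul_cancel₀ hune, mul_one]
        _ = δ g * ρ g * u := by rw [← hrel g]
    have hcases : ∀ g : G, ∀ x : ℍ[ℝ], ρ g = x → (u * x = x * u ∨ u * x = -(x * u)) := by
      intro g x hx
      have h := hrel' g
      rw [hx] at h
      rcases hδs g with h0 | h0 <;> rw [h0] at h
      · left; rw [h, one_mul]
      · right; rw [h, neg_one_mul, neg_mul]
    have hi := hcases gi qi hgi
    have hj := hcases gj qj hgj
    have hfinish : ∀ q ∈ ({1, qi, qj, qk} : Set ℍ[ℝ]),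
        (∀ g, u * ρ g * u⁻¹ = q * ρ g * q⁻¹) → δ ∈ S := by
      intro q hqb hconj
      have hdq : δ = twist ρ q := by
        funext g
        refine mul_right_cancel₀ (hρne g) ?_
        rw [hrel g, hconj g, ← twist_conj (hcommq q hqb) (base_ne_zero q hqb) g]
      rw [hS, hdq]
      rcases hqb with rfl | rfl | rfl | rfl <;> simp
    rcases hi with hi | hi <;> rcases hj with hj | hj
    · obtain ⟨h1, h2⟩ := comm_qi hi
      obtain ⟨h3, _⟩ := comm_qj hj
      have hur : u = ((u.re : ℝ) : ℍ[ℝ]) := by ext <;> simp [h1, h2, h3]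
      have hc : u.re ≠ 0 := fun h0 => hune (by rw [hur, h0]; simp)
      refine hfinish 1 (by simp) fun g => ?_
      rw [hur, conj_coe hc (ρ g)]
      simp
    · obtain ⟨h1, h2⟩ := comm_qi hi
      obtain ⟨h3, _⟩ := anticomm_qj hj
      have hur : u = ((u.imI : ℝ) : ℍ[ℝ]) * qi := by ext <;> simp [qi_re, qi_imI, qi_imJ, qi_imK, h1, h2, h3]
      have hc : u.imI ≠ 0 := fun h0 => hune (by rw [hur, h0]; simp)
      refine hfinish qi (by simp) fun g => ?_
      rw [hur]
      exact conj_coe_mul hc (base_ne_zero qi (by simp)) (ρ g)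
    · obtain ⟨h1, h2⟩ := anticomm_qi hi
      obtain ⟨h3, h4⟩ := comm_qj hj
      have hur : u = ((u.imJ : ℝ) : ℍ[ℝ]) * qj := by ext <;> simp [qj_re, qj_imI, qj_imJ, qj_imK, h1, h2, h4]
      have hc : u.imJ ≠ 0 := fun h0 => hune (by rw [hur, h0]; simp)
      refine hfinish qj (by simp) fun g => ?_
      rw [hur]
      exact conj_coe_mul hc (base_ne_zero qj (by simp)) (ρ g)
    · obtain ⟨h1, h2⟩ := anticomm_qi hi
      obtain ⟨h3, h4⟩ := anticomm_qj hj
      have hur : u = ((u.imK : ℝ) : ℍ[ℝ]) * qk := by ext <;> simp [qk_re, qk_imI, qk_imJ, qk_imK, h1, h2, h4]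
      have hc : u.imK ≠ 0 := fun h0 => hune (by rw [hur, h0]; simp)
      refine hfinish qk (by simp) fun g => ?_
      rw [hur]
      exact conj_coe_mul hc (base_ne_zero qk (by simp)) (ρ g)
  -- the fibers of the twisting map are cosets of S
  have hfiber : ∀ χ₀ : G → ℍ[ℝ], IsSignHom χ₀ →
      {χ | IsSignHom χ ∧ conjClass (fun g => χ g * ρ g) = conjClass (fun g => χ₀ g * ρ g)}
        = (fun s => χ₀ * s) '' S := by
    intro χ₀ hχ₀
    ext χ
    simp only [Set.mem_setOf_eq, Set.mem_image]
    constructor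
    · rintro ⟨hχ, hfe⟩
      have hmem : (fun g => χ g * ρ g) ∈ conjClass (fun g => χ₀ g * ρ g) := by
        rw [← hfe]
        exact mem_conjClass_self _
      obtain ⟨u, hu, hconj⟩ := hmem
      have hδs : ∀ g, χ₀ g * χ g = 1 ∨ χ₀ g * χ g = -1 := by
        intro g
        rcases hχ₀.1 g with h1 | h1 <;> rcases hχ.1 g with h2 | h2 <;> rw [h1, h2] <;>
          norm_num
      have hδrel : ∀ g, (χ₀ g * χ g) * ρ g = u * ρ g * u⁻¹ := by
        intro g
        have h1 : χ g * ρ g = u * (χ₀ g * ρ g) * u⁻¹ := hconj g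
        rcases hχ₀.1 g with h0 | h0 <;> rw [h0] at h1 ⊢
        · simp only [one_mul] at h1 ⊢
          exact h1
        · simp only [neg_one_mul, neg_mul, mul_neg, one_mul] at h1 ⊢
          rw [h1, neg_neg]
      have hδS : (χ₀ * χ) ∈ S :=
        hclassify u hu (χ₀ * χ) (fun g => hδs g) (fun g => hδrel g)
      refine ⟨χ₀ * χ, hδS, ?_⟩
      funext g
      show χ₀ g * (χ₀ g * χ g) = χ g
      rw [← mul_assoc, sgn_sq (hχ₀.1 g), one_mul]
    · rintro ⟨s, hsS, rfl⟩
      obtain ⟨q, hqb, rfl⟩ := hSdecomp s hsS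
      constructor
      · exact signhom_mul hχ₀ (twist_hom hρ (base_ne_zero q hqb) (hcommq q hqb))
      · refine (conjClass_eq q (base_norm q hqb) fun g => ?_).symm
        show (χ₀ g * twist ρ q g) * ρ g = q * (χ₀ g * ρ g) * q⁻¹
        have hts := twist_conj (hcommq q hqb) (base_ne_zero q hqb) g
        rcases hχ₀.1 g with h0 | h0 <;> rw [h0]
        · simp only [one_mul]
          exact hts
        · simp only [neg_one_mul, neg_mul, mul_neg, one_mul]
          rw [hts]
  -- finiteness and fiber cardinality
  have hHfin : ({χ : G → ℍ[ℝ] | IsSignHom χ}).Finite := by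
    by_contra hinf
    have h0 := Set.Infinite.ncard hinf
    rw [h0] at hhom
    norm_num at hhom
  have hfibcard : ∀ χ₀ ∈ {χ : G → ℍ[ℝ] | IsSignHom χ},
      {χ | IsSignHom χ ∧ conjClass (fun g => χ g * ρ g) = conjClass (fun g => χ₀ g * ρ g)}.ncard
        = 4 := by
    intro χ₀ hχ₀
    have hinj : Set.InjOn (fun s => χ₀ * s) S := by
      intro s hs s' hs' h
      funext g
      have hg : χ₀ g * s g = χ₀ g * s' g := congrFun h g
      exact mul_left_cancel₀ (sgn_ne_zero (hχ₀.1 g)) hg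
    rw [hfiber χ₀ hχ₀, Set.ncard_image_of_injOn hinj, hScard]
  have hcount := ncard_image_fibers hHfin
    (fun χ => conjClass (fun g => χ g * ρ g)) hfibcard
  rw [hhom] at hcount
  have hgoal : {C : Set (G → ℍ[ℝ]) | ∃ χ : G → ℍ[ℝ], IsSignHom χ ∧
      C = conjClass (fun g => χ g * ρ g)}
        = (fun χ => conjClass (fun g => χ g * ρ g)) '' {χ | IsSignHom χ} := by
    ext C
    simp only [Set.mem_image, Set.mem_setOf_eq]
    constructor
    · rintro ⟨χ, h1, h2⟩; exact ⟨χ, h1, h2.symm⟩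
    · rintro ⟨χ, h1, h2⟩; exact ⟨χ, h1, h2.symm⟩
  rw [hgoal]
  clear hgoal hfibcard hHfin hfiber hclassify hSdecomp hScard
  revert hcount
  generalize ((fun χ => conjClass (fun g => χ g * ρ g)) '' {χ : G → ℍ[ℝ] | IsSignHom χ}).ncard = n
  omega
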